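/- Let d be a positive integer, c > 0 a real number, α a real number with -d < α < d, Λ a full-rank ℤ-lattice in ℝ^{2d}, and s a real number. Then the family of real numbers consisting of (1 + (π|n|/(2c))(d + 2j) + (π²/(4c²))n²)^{s/2} / ((π|n|/(2c))(d + 2j - α·sgn(n))) for all nonzero integers n and integers j ≥ 0, together with (1 + (π/2)‖ξ‖²)^{s/2} / ((π/2)‖ξ‖²) for all ξ ∈ Λ \ {0}, is bounded above if and only if s ≤ 1. -/

import Mathlib

open Real

private lemma ratio_le_aux {s μ lam K : ℝ} (hs : s ≤ 1) (hμ : 0 ≤ μ) (hlam : 0 < lam)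
    (h : Real.sqrt (1 + μ) ≤ K * lam) : (1 + μ) ^ (s / 2) / lam ≤ K := by
  have h1 : (1:ℝ) ≤ 1 + μ := by linarith
  have h2 : (1 + μ) ^ (s / 2) ≤ (1 + μ) ^ ((1:ℝ) / 2) :=
    Real.rpow_le_rpow_of_exponent_le h1 (by linarith)
  rw [div_le_iff₀ hlam]
  calc (1 + μ) ^ (s / 2) ≤ (1 + μ) ^ ((1:ℝ)/2) := h2
    _ = Real.sqrt (1 + μ) := (Real.sqrt_eq_rpow _).symm
    _ ≤ K * lam := h

private lemma sqrt_quad_le {z z0 : ℝ} (hz0 : 0 < z0) (hz : z0 ≤ z) :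
    Real.sqrt (1 + z) ≤ Real.sqrt (1 / z0 ^ 2 + 1 / z0) * z := by
  have hz' : 0 < z := lt_of_lt_of_le hz0 hz
  have h1 : (1:ℝ) ≤ z ^ 2 / z0 ^ 2 := by
    rw [le_div_iff₀ (by positivity)]
    nlinarith
  have h2 : z ≤ z ^ 2 / z0 := by
    rw [le_div_iff₀ hz0]
    nlinarith
  have key : 1 + z ≤ (1 / z0 ^ 2 + 1 / z0) * z ^ 2 := by
    have : (1 / z0 ^ 2 + 1 / z0) * z ^ 2 = z ^ 2 / z0 ^ 2 + z ^ 2 / z0 := by ring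
    rw [this]; linarith
  calc Real.sqrt (1 + z) ≤ Real.sqrt ((1 / z0 ^ 2 + 1 / z0) * z ^ 2) := Real.sqrt_le_sqrt key
    _ = Real.sqrt (1 / z0 ^ 2 + 1 / z0) * z := by
        rw [Real.sqrt_mul (by positivity), Real.sqrt_sq hz'.le]

set_option maxHeartbeats 2000000 in
/-- For `-d < α < d`, the full family of eigenvalue ratios `(1 + μ_ℓ)^{s/2} / λ_ℓ`
(type (a) together with type (b)) is bounded above iff `s ≤ 1`. -/
theorem ratio_family_bddAbove_iff (d : ℕ) (hd : 0 < d) (c : ℝ) (hc : 0 < c)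
    (α : ℝ) (hα : -(d : ℝ) < α) (hα' : α < d)
    (Λ : AddSubgroup (EuclideanSpace ℝ (Fin (2 * d))))
    (hdisc : DiscreteTopology Λ)
    (hspan : Submodule.span ℝ (Λ : Set (EuclideanSpace ℝ (Fin (2 * d)))) = ⊤)
    (s : ℝ) :
    BddAbove
      ((Set.range fun p : {n : ℤ // n ≠ 0} × ℕ =>
          (1 + π * |((p.1 : ℤ) : ℝ)| / (2 * c) * ((d : ℝ) + 2 * p.2) +
              π ^ 2 / (4 * c ^ 2) * ((p.1 : ℤ) : ℝ) ^ 2) ^ (s / 2) /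
            (π * |((p.1 : ℤ) : ℝ)| / (2 * c) *
              ((d : ℝ) + 2 * p.2 - α * ((p.1 : ℤ).sign : ℝ)))) ∪
        (Set.range fun ξ : {x : Λ // x ≠ 0} =>
          (1 + π / 2 * ‖((ξ : Λ) : EuclideanSpace ℝ (Fin (2 * d)))‖ ^ 2) ^ (s / 2) /
            (π / 2 * ‖((ξ : Λ) : EuclideanSpace ℝ (Fin (2 * d)))‖ ^ 2))) ↔ s ≤ 1 := by
  have hπ : (0:ℝ) < π := Real.pi_pos
  have hd1 : (1:ℝ) ≤ (d:ℝ) := by exact_mod_cast hd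
  have hdα : (0:ℝ) < (d:ℝ) - α := by linarith
  have hαd : |α| < (d:ℝ) := abs_lt.mpr ⟨by linarith, hα'⟩
  constructor
  · -- boundedness implies s ≤ 1
    rintro ⟨M, hM⟩
    by_contra hs
    push_neg at hs
    -- lower bound for element with n = k > 0, j = 0
    have key : ∀ k : ℕ, 0 < k → (π * k / (2 * c)) ^ (s - 1) ≤ M * ((d:ℝ) - α) := by
      intro k hk
      have hkz : ((k:ℤ)) ≠ 0 := by exact_mod_cast hk.ne'
      set p : {n : ℤ // n ≠ 0} × ℕ := (⟨(k:ℤ), hkz⟩, 0) with hp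
      have hmem : ((1 + π * |((p.1 : ℤ) : ℝ)| / (2 * c) * ((d : ℝ) + 2 * p.2) +
              π ^ 2 / (4 * c ^ 2) * ((p.1 : ℤ) : ℝ) ^ 2) ^ (s / 2) /
            (π * |((p.1 : ℤ) : ℝ)| / (2 * c) *
              ((d : ℝ) + 2 * p.2 - α * ((p.1 : ℤ).sign : ℝ)))) ≤ M :=
        hM (Set.mem_union_left _ (Set.mem_range_self p))
      have hsign : ((k:ℤ).sign : ℝ) = 1 := by
        rw [Int.sign_eq_one_iff_pos.mpr (by exact_mod_cast hk)]; norm_num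
      have habs : |(((k:ℤ)):ℝ)| = (k:ℝ) := by
        rw [abs_of_nonneg]; · push_cast; ring
        · positivity
      set u : ℝ := π * k / (2 * c) with hu_def
      have hu : 0 < u := by positivity
      have hval : ((1 + π * |((p.1 : ℤ) : ℝ)| / (2 * c) * ((d : ℝ) + 2 * p.2) +
              π ^ 2 / (4 * c ^ 2) * ((p.1 : ℤ) : ℝ) ^ 2) ^ (s / 2) /
            (π * |((p.1 : ℤ) : ℝ)| / (2 * c) *
              ((d : ℝ) + 2 * p.2 - α * ((p.1 : ℤ).sign : ℝ))))
          = (1 + u * d + u ^ 2) ^ (s / 2) / (u * ((d:ℝ) - α)) := by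
        simp only [hp, habs, hsign]
        push_cast
        rw [show π ^ 2 / (4 * c ^ 2) * (k:ℝ) ^ 2 = u ^ 2 by rw [hu_def]; field_simp; ring]
        rw [hu_def]
        ring_nf
      rw [hval] at hmem
      have hbase : u ^ 2 ≤ 1 + u * d + u ^ 2 := by nlinarith
      have hpow : u ^ s ≤ (1 + u * d + u ^ 2) ^ (s / 2) := by
        have h1 : (u ^ 2 : ℝ) ^ (s / 2) ≤ (1 + u * d + u ^ 2) ^ (s / 2) :=
          Real.rpow_le_rpow (by positivity) hbase (by linarith)
        have h2 : (u ^ 2 : ℝ) ^ (s / 2) = u ^ s := by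
          rw [← Real.rpow_natCast u 2, ← Real.rpow_mul hu.le]
          congr 1
          push_cast
          ring
        linarith [h2 ▸ h1]
      have hden : 0 < u * ((d:ℝ) - α) := by positivity
      have hstep : u ^ s / (u * ((d:ℝ) - α)) ≤
          (1 + u * d + u ^ 2) ^ (s / 2) / (u * ((d:ℝ) - α)) := by gcongr
      have : u ^ s / (u * ((d:ℝ) - α)) ≤ M := le_trans hstep hmem
      have heq : u ^ s / (u * ((d:ℝ) - α)) = u ^ (s - 1) / ((d:ℝ) - α) := by
        rw [Real.rpow_sub_one hu.ne', div_div]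
      rw [heq, div_le_iff₀ hdα] at this
      exact this
    -- now derive a contradiction
    set T := M * ((d:ℝ) - α) with hT
    have hT0 : 0 < T := lt_of_lt_of_le (by positivity) (key 1 one_pos)
    obtain ⟨k, hk⟩ := exists_nat_gt (2 * c / π * (T ^ (1 / (s - 1))) + 1)
    have hR : 0 < T ^ (1 / (s - 1)) := Real.rpow_pos_of_pos hT0 _
    have hpos1 : (0:ℝ) < 2 * c / π * (T ^ (1 / (s - 1))) + 1 := by positivity
    have hkpos : 0 < k := by exact_mod_cast Nat.cast_pos.mp (lt_trans hpos1 hk)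
    have hgt : T ^ (1 / (s - 1)) < π * k / (2 * c) := by
      rw [lt_div_iff₀ (by positivity)]
      have : 2 * c / π * T ^ (1 / (s - 1)) < (k:ℝ) := by linarith
      calc T ^ (1 / (s - 1)) * (2 * c) = (2 * c / π * T ^ (1 / (s - 1))) * π := by
            field_simp
        _ < (k:ℝ) * π := by nlinarith
        _ = π * k := by ring
    have hlt : T < (π * k / (2 * c)) ^ (s - 1) := by
      have h1 : (T ^ (1 / (s - 1))) ^ (s - 1) < (π * k / (2 * c)) ^ (s - 1) :=
        Real.rpow_lt_rpow hR.le hgt (by linarith)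
      rwa [← Real.rpow_mul hT0.le, one_div_mul_cancel (by linarith : s - 1 ≠ 0),
        Real.rpow_one] at h1
    exact absurd (key k hkpos) (by linarith)
  · -- s ≤ 1 implies boundedness
    intro hs
    -- constants
    set u0 : ℝ := π / (2 * c) with hu0
    have hu0pos : 0 < u0 := by positivity
    have hu0d : 0 < u0 * d := by positivity
    set κ : ℝ := ((d:ℝ) - |α|) / d with hκ
    have hκpos : 0 < κ := by
      apply div_pos (by linarith) (by positivity)
    set Ka : ℝ := Real.sqrt ((1 / (u0 * ↑d)) ^ 2 + 1 / (u0 * ↑d) + (1 / (d:ℝ)) ^ 2) / κ with hKa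
    -- discreteness : lattice points are norm-bounded below
    obtain ⟨ε, hε, hball⟩ := Metric.isOpen_iff.mp (isOpen_discrete ({0} : Set Λ)) 0 rfl
    have hnorm : ∀ x : Λ, x ≠ 0 → ε ≤ ‖(x : EuclideanSpace ℝ (Fin (2 * d)))‖ := by
      intro x hx
      by_contra h
      push_neg at h
      apply hx
      have : x ∈ Metric.ball (0 : Λ) ε := by
        rw [Metric.mem_ball, Subtype.dist_eq]
        simpa [dist_eq_norm] using h
      simpa using hball this
    set z0 : ℝ := π / 2 * ε ^ 2 with hz0
    have hz0pos : 0 < z0 := by positivity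
    set Kb : ℝ := Real.sqrt (1 / z0 ^ 2 + 1 / z0) with hKb
    refine ⟨max Ka Kb, ?_⟩
    rintro x (⟨p, rfl⟩ | ⟨ξ, rfl⟩)
    · -- type (a)
      refine le_trans ?_ (le_max_left Ka Kb)
      obtain ⟨⟨n, hn⟩, j⟩ := p
      simp only
      have habs1 : (1:ℝ) ≤ |(n:ℝ)| := by
        have := Int.one_le_abs hn
        calc (1:ℝ) = ((1:ℤ):ℝ) := by norm_num
          _ ≤ ((|n|:ℤ):ℝ) := by exact_mod_cast this
          _ = |(n:ℝ)| := by push_cast; ring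
      set u : ℝ := π * |(n:ℝ)| / (2 * c) with hu_def
      have hu : u0 ≤ u := by
        rw [hu_def, hu0]
        rw [div_le_div_iff₀ (by positivity) (by positivity)]
        nlinarith [mul_nonneg (by linarith : (0:ℝ) ≤ |(n:ℝ)| - 1) (by positivity : (0:ℝ) ≤ π * (2 * c))]
      have hupos : 0 < u := lt_of_lt_of_le hu0pos hu
      set m : ℝ := (d:ℝ) + 2 * j with hm_def
      have hm : (d:ℝ) ≤ m := by
        have : (0:ℝ) ≤ 2 * j := by positivity
        rw [hm_def]; linarith
      have hmpos : 0 < m := by linarith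
      -- the sign term
      have hsign : |α * ((n.sign : ℤ) : ℝ)| ≤ |α| := by
        rcases Ne.lt_or_gt hn with h | h
        · rw [Int.sign_eq_neg_one_of_neg h]; push_cast; rw [abs_mul]; simp
        · rw [Int.sign_eq_one_iff_pos.mpr h]; push_cast; rw [abs_mul]; simp
      -- denominator lower bound
      have hden_ge : κ * (u * m) ≤ u * (m - α * ((n.sign : ℤ) : ℝ)) := by
        have h1 : α * ((n.sign : ℤ) : ℝ) ≤ |α| := le_trans (le_abs_self _) hsign
        have h2 : κ * m ≤ m - α * ((n.sign : ℤ) : ℝ) := by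
          rw [hκ, div_mul_eq_mul_div, div_le_iff₀ (by positivity : (0:ℝ) < (d:ℝ))]
          nlinarith [abs_nonneg α]
        calc κ * (u * m) = u * (κ * m) := by ring
          _ ≤ u * (m - α * ((n.sign : ℤ) : ℝ)) := by
              exact mul_le_mul_of_nonneg_left h2 hupos.le
      have hdenpos : 0 < u * (m - α * ((n.sign : ℤ) : ℝ)) :=
        lt_of_lt_of_le (by positivity) hden_ge
      -- numerator: μ = u*m + u^2
      have hu2 : π ^ 2 / (4 * c ^ 2) * (n:ℝ) ^ 2 = u ^ 2 := by
        rw [hu_def]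
        rw [div_pow, mul_pow, sq_abs]
        field_simp
        ring
      have hE : u0 * ↑d ≤ u * m := by nlinarith
      have hEpos : 0 < u * m := by positivity
      set C : ℝ := (1 / (u0 * ↑d)) ^ 2 + 1 / (u0 * ↑d) + (1 / (d:ℝ)) ^ 2 with hC
      have hq : 1 + (u * m + u ^ 2) ≤ C * (u * m) ^ 2 := by
        have c1 : (1:ℝ) ≤ (u * m) ^ 2 * (1 / (u0 * ↑d)) ^ 2 := by
          have h1 : (1:ℝ) ≤ (u * m) * (1 / (u0 * ↑d)) := by
            rw [mul_one_div, le_div_iff₀ hu0d]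
            linarith
          nlinarith
        have c2 : u * m ≤ (u * m) ^ 2 * (1 / (u0 * ↑d)) := by
          rw [mul_one_div, le_div_iff₀ hu0d]
          nlinarith
        have c3 : u ^ 2 ≤ (u * m) ^ 2 * (1 / (d:ℝ)) ^ 2 := by
          have h1 : u ≤ (u * m) * (1 / (d:ℝ)) := by
            rw [mul_one_div, le_div_iff₀ (by positivity : (0:ℝ) < (d:ℝ))]
            nlinarith
          calc u ^ 2 ≤ ((u * m) * (1 / (d:ℝ))) ^ 2 := by
                exact pow_le_pow_left₀ hupos.le h1 2
            _ = (u * m) ^ 2 * (1 / (d:ℝ)) ^ 2 := by ring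
        have hsum : C * (u * m) ^ 2 = (u * m) ^ 2 * (1 / (u0 * ↑d)) ^ 2
            + (u * m) ^ 2 * (1 / (u0 * ↑d)) + (u * m) ^ 2 * (1 / (d:ℝ)) ^ 2 := by
          rw [hC]; ring
        rw [hsum]
        linarith
      have hCpos : (0:ℝ) ≤ C := by positivity
      have hsqrt : Real.sqrt (1 + (u * m + u ^ 2)) ≤ Real.sqrt C * (u * m) := by
        calc Real.sqrt (1 + (u * m + u ^ 2)) ≤ Real.sqrt (C * (u * m) ^ 2) :=
              Real.sqrt_le_sqrt hq
          _ = Real.sqrt C * (u * m) := by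
              rw [Real.sqrt_mul hCpos, Real.sqrt_sq hEpos.le]
      -- put the goal in standard form
      rw [hu2, show (1:ℝ) + u * m + u ^ 2 = 1 + (u * m + u ^ 2) by ring]
      refine ratio_le_aux hs (by positivity) hdenpos ?_
      have hKaκ : Ka * κ = Real.sqrt C := by
        rw [hKa, hC, div_mul_cancel₀]
        exact hκpos.ne'
      calc Real.sqrt (1 + (u * m + u ^ 2)) ≤ Real.sqrt C * (u * m) := hsqrt
        _ = Ka * (κ * (u * m)) := by rw [← hKaκ]; ring
        _ ≤ Ka * (u * (m - α * ((n.sign : ℤ) : ℝ))) := by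
            apply mul_le_mul_of_nonneg_left hden_ge
            rw [hKa]; positivity
    · -- type (b)
      refine le_trans ?_ (le_max_right Ka Kb)
      obtain ⟨x, hx⟩ := ξ
      simp only
      set z : ℝ := π / 2 * ‖(x : EuclideanSpace ℝ (Fin (2 * d)))‖ ^ 2 with hz
      have hzge : z0 ≤ z := by
        rw [hz, hz0]
        have h1 : ε ≤ ‖(x : EuclideanSpace ℝ (Fin (2 * d)))‖ := hnorm x hx
        have h2 : ε ^ 2 ≤ ‖(x : EuclideanSpace ℝ (Fin (2 * d)))‖ ^ 2 :=
          pow_le_pow_left₀ hε.le h1 2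
        nlinarith
      have hzpos : 0 < z := lt_of_lt_of_le hz0pos hzge
      rw [show (1:ℝ) + z = 1 + z by ring]
      refine ratio_le_aux hs hzpos.le hzpos ?_
      rw [hKb]
      exact sqrt_quad_le hz0pos hzge
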